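/- Let G be a connected graph of order at least two and let I be a maximum independent set of G. Then γ(G) = β(G) if and only if: (1) each support vertex of G belonging to I is a weak support and each of its non-leaf neighbors is a support; (2) if uv is an edge of G with both u, v ∉ I, then both u and v are support vertices; and (3) if x, y are vertices not in I and neither leaves nor supports with d(x,y) = 2, then there exist two distinct vertices x̄, ȳ in I with N(x̄) = N(ȳ) = {x, y}. -/

import Mathlib

open Finset

set_option linter.unusedSectionVars false

variable {V : Type} [Fintype V] [DecidableEq V]

def IsDomSet (G : SimpleGraph V) (D : Finset V) : Prop :=
  ∀ v : V, v ∉ D → ∃ u ∈ D, G.Adj u v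

noncomputable def domNum (G : SimpleGraph V) : ℕ :=
  sInf {n | ∃ D : Finset V, IsDomSet G D ∧ D.card = n}

def IsVertexCover (G : SimpleGraph V) (C : Finset V) : Prop :=
  ∀ ⦃u v : V⦄, G.Adj u v → u ∈ C ∨ v ∈ C

noncomputable def coverNum (G : SimpleGraph V) : ℕ :=
  sInf {n | ∃ C : Finset V, IsVertexCover G C ∧ C.card = n}

def IsIndepFinset (G : SimpleGraph V) (I : Finset V) : Prop :=
  ∀ u ∈ I, ∀ v ∈ I, ¬ G.Adj u v

noncomputable def indepNum (G : SimpleGraph V) : ℕ :=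
  sSup {n | ∃ I : Finset V, IsIndepFinset G I ∧ I.card = n}

def IsLeaf (G : SimpleGraph V) [DecidableRel G.Adj] (v : V) : Prop :=
  G.degree v = 1

def IsSupport (G : SimpleGraph V) [DecidableRel G.Adj] (v : V) : Prop :=
  ∃ u, G.Adj v u ∧ IsLeaf G u

def IsWeakSupport (G : SimpleGraph V) [DecidableRel G.Adj] (v : V) : Prop :=
  ((G.neighborFinset v).filter fun l => G.degree l = 1).card = 1

def IsBipartition (G : SimpleGraph V) (A B : Finset V) : Prop :=
  A ∪ B = Finset.univ ∧ Disjoint A B ∧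
    ∀ ⦃u v : V⦄, G.Adj u v → (u ∈ A ∧ v ∈ B) ∨ (u ∈ B ∧ v ∈ A)


lemma exists_adj_of_conn (G : SimpleGraph V) (hconn : G.Connected)
    (hcard : 2 ≤ Fintype.card V) (v : V) : ∃ u, G.Adj v u := by
  obtain ⟨w, hw⟩ := Fintype.exists_ne_of_one_lt_card (by omega) v
  obtain ⟨p⟩ := hconn.preconnected v w
  cases p with
  | nil => exact absurd rfl hw
  | cons h q => exact ⟨_, h⟩

lemma card_le_indepNum {G : SimpleGraph V} {J : Finset V} (hJ : IsIndepFinset G J) :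
    J.card ≤ indepNum G := by
  apply le_csSup
  · exact ⟨Fintype.card V, by rintro n ⟨J, _, rfl⟩; simpa using J.card_le_univ⟩
  · exact ⟨J, hJ, rfl⟩

lemma coverNum_exists (G : SimpleGraph V) :
    ∃ C : Finset V, IsVertexCover G C ∧ C.card = coverNum G := by
  have h : coverNum G ∈ {n | ∃ C : Finset V, IsVertexCover G C ∧ C.card = n} :=
    Nat.sInf_mem ⟨(Finset.univ : Finset V).card, Finset.univ,
      fun u v _ => Or.inl (Finset.mem_univ u), rfl⟩
  obtain ⟨C, hC, hc⟩ := h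
  exact ⟨C, hC, hc⟩

lemma coverNum_le {G : SimpleGraph V} {C : Finset V} (hC : IsVertexCover G C) :
    coverNum G ≤ C.card := Nat.sInf_le ⟨C, hC, rfl⟩

lemma domNum_exists (G : SimpleGraph V) :
    ∃ D : Finset V, IsDomSet G D ∧ D.card = domNum G := by
  have h : domNum G ∈ {n | ∃ D : Finset V, IsDomSet G D ∧ D.card = n} :=
    Nat.sInf_mem ⟨(Finset.univ : Finset V).card, Finset.univ,
      fun v hv => absurd (Finset.mem_univ v) hv, rfl⟩
  obtain ⟨D, hD, hd⟩ := h
  exact ⟨D, hD, hd⟩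

lemma domNum_le {G : SimpleGraph V} {D : Finset V} (hD : IsDomSet G D) :
    domNum G ≤ D.card := Nat.sInf_le ⟨D, hD, rfl⟩

lemma compl_indep_cover {G : SimpleGraph V} {I : Finset V} (hI : IsIndepFinset G I) :
    IsVertexCover G (Finset.univ \ I) := by
  intro u v huv
  by_cases hu : u ∈ I
  · by_cases hv : v ∈ I
    · exact absurd huv (hI u hu v hv)
    · exact Or.inr (Finset.mem_sdiff.2 ⟨Finset.mem_univ v, hv⟩)
  · exact Or.inl (Finset.mem_sdiff.2 ⟨Finset.mem_univ u, hu⟩)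

lemma coverNum_eq_compl_card {G : SimpleGraph V} {I : Finset V} (hI : IsIndepFinset G I)
    (hImax : I.card = indepNum G) : coverNum G = (Finset.univ \ I).card := by
  apply le_antisymm (coverNum_le (compl_indep_cover hI))
  obtain ⟨C, hC, hc⟩ := coverNum_exists G
  have hind : IsIndepFinset G (Finset.univ \ C) := by
    intro u hu v hv huv
    rcases hC huv with h | h
    · exact (Finset.mem_sdiff.1 hu).2 h
    · exact (Finset.mem_sdiff.1 hv).2 h
  have h1 : (Finset.univ \ C).card ≤ I.card := by
    rw [hImax]; exact card_le_indepNum hind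
  have h2 : (Finset.univ \ C).card + C.card = Fintype.card V := by
    rw [Finset.card_sdiff_add_card_eq_card (Finset.subset_univ C), Finset.card_univ]
  have h3 : (Finset.univ \ I).card + I.card = Fintype.card V := by
    rw [Finset.card_sdiff_add_card_eq_card (Finset.subset_univ I), Finset.card_univ]
  omega

lemma domNum_le_coverNum {G : SimpleGraph V} (hconn : G.Connected)
    (hcard : 2 ≤ Fintype.card V) : domNum G ≤ coverNum G := by
  obtain ⟨C, hC, hc⟩ := coverNum_exists G
  rw [← hc]
  apply domNum_le
  intro v hv
  obtain ⟨u, hu⟩ := exists_adj_of_conn G hconn hcard v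
  rcases hC hu.symm with h | h
  · exact ⟨u, h, hu.symm⟩
  · exact absurd h hv

lemma leaf_unique_nbr {G : SimpleGraph V} [DecidableRel G.Adj] {l a b : V}
    (hl : IsLeaf G l) (ha : G.Adj l a) (hb : G.Adj l b) : a = b := by
  obtain ⟨c, hc⟩ := Finset.card_eq_one.1 hl
  have h1 : a ∈ G.neighborFinset l := (SimpleGraph.mem_neighborFinset G l a).2 ha
  have h2 : b ∈ G.neighborFinset l := (SimpleGraph.mem_neighborFinset G l b).2 hb
  rw [hc, Finset.mem_singleton] at h1 h2
  rw [h1, h2]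

lemma leaf_support_mem {G : SimpleGraph V} [DecidableRel G.Adj] {I : Finset V}
    (hI : IsIndepFinset G I) (hImax : I.card = indepNum G) {l s : V}
    (hl : IsLeaf G l) (hlI : l ∉ I) (hs : G.Adj l s) : s ∈ I := by
  by_contra hsI
  have hind : IsIndepFinset G (insert l I) := by
    intro u hu v hv huv
    rcases Finset.mem_insert.1 hu with hu' | hu'
    · subst hu'
      rcases Finset.mem_insert.1 hv with hv' | hv'
      · subst hv'; exact G.irrefl huv
      · have heq : v = s := leaf_unique_nbr hl huv hs
        exact hsI (heq ▸ hv')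
    · rcases Finset.mem_insert.1 hv with hv' | hv'
      · subst hv'
        have heq : u = s := leaf_unique_nbr hl huv.symm hs
        exact hsI (heq ▸ hu')
      · exact hI u hu' v hv' huv
  have := card_le_indepNum hind
  rw [Finset.card_insert_of_notMem hlI, ← hImax] at this
  omega

lemma dist_eq_two_of {G : SimpleGraph V} {x y z : V} (h1 : G.Adj x z) (h2 : G.Adj z y)
    (hne : x ≠ y) (hna : ¬ G.Adj x y) : G.dist x y = 2 := by
  have hle : G.dist x y ≤ 2 := by
    have := SimpleGraph.dist_le (h1.toWalk.append h2.toWalk)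
    simpa using this
  have h0 : G.dist x y ≠ 0 := by
    intro h
    rcases SimpleGraph.dist_eq_zero_iff_eq_or_not_reachable.1 h with h | h
    · exact hne h
    · exact h ⟨h1.toWalk.append h2.toWalk⟩
  have hone : G.dist x y ≠ 1 := fun h => hna (SimpleGraph.dist_eq_one_iff_adj.1 h)
  omega

lemma common_of_dist_two {G : SimpleGraph V} (hconn : G.Connected) {x y : V}
    (h : G.dist x y = 2) : ∃ z, G.Adj x z ∧ G.Adj z y := by
  obtain ⟨p, hp⟩ := (hconn.preconnected x y).exists_walk_length_eq_dist
  rw [h] at hp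
  cases p with
  | nil => simp at hp
  | cons hadj q =>
    cases q with
    | nil => simp at hp
    | cons hadj' q' =>
      have : q'.length = 0 := by rw [SimpleGraph.Walk.length_cons, SimpleGraph.Walk.length_cons] at hp; omega
      have heq := SimpleGraph.Walk.eq_of_length_eq_zero this
      subst heq
      exact ⟨_, hadj, hadj'⟩

lemma forward_contra {G : SimpleGraph V} {I : Finset V} (hI : IsIndepFinset G I)
    (hImax : I.card = indepNum G) {D : Finset V} (hD : IsDomSet G D)
    (hlt : D.card < (Finset.univ \ I).card) (heq : domNum G = coverNum G) : False := by
  have h1 := domNum_le hD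
  rw [coverNum_eq_compl_card hI hImax] at heq
  omega

lemma leaf_of_nbr_eq {G : SimpleGraph V} [DecidableRel G.Adj] (hconn : G.Connected)
    (hcard : 2 ≤ Fintype.card V) {w u : V} (h : ∀ z, G.Adj w z → z = u) :
    G.Adj w u ∧ IsLeaf G w := by
  obtain ⟨z, hz⟩ := exists_adj_of_conn G hconn hcard w
  have hzu := h z hz
  subst hzu
  refine ⟨hz, ?_⟩
  unfold IsLeaf
  rw [← SimpleGraph.card_neighborFinset_eq_degree]
  have : G.neighborFinset w = {z} := by
    ext t
    simp only [SimpleGraph.mem_neighborFinset, Finset.mem_singleton]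
    exact ⟨fun ht => h t ht, fun ht => ht ▸ hz⟩
  rw [this, Finset.card_singleton]

lemma not_mem_I_of_adj {G : SimpleGraph V} {I : Finset V} (hI : IsIndepFinset G I)
    {v u : V} (hv : v ∈ I) (h : G.Adj v u) : u ∉ I :=
  fun hu => hI v hv u hu h

lemma cond2_of_eq {G : SimpleGraph V} [DecidableRel G.Adj] (hconn : G.Connected)
    (hcard : 2 ≤ Fintype.card V) {I : Finset V} (hI : IsIndepFinset G I)
    (hImax : I.card = indepNum G) (heq : domNum G = coverNum G) :
    ∀ u v : V, G.Adj u v → u ∉ I → v ∉ I → IsSupport G u ∧ IsSupport G v := by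
  have key : ∀ u v : V, G.Adj u v → u ∉ I → v ∉ I → ¬ IsSupport G u → False := by
    intro u v huv hu hv hns
    have huC : u ∈ Finset.univ \ I := Finset.mem_sdiff.2 ⟨Finset.mem_univ u, hu⟩
    apply forward_contra hI hImax (D := (Finset.univ \ I).erase u) ?_ ?_ heq
    · intro w hw
      by_cases hwu : w = u
      · subst hwu
        refine ⟨v, Finset.mem_erase.2 ⟨huv.ne', Finset.mem_sdiff.2 ⟨Finset.mem_univ v, hv⟩⟩, huv.symm⟩
      · have hwI : w ∈ I := by
          by_contra hwI
          exact hw (Finset.mem_erase.2 ⟨hwu, Finset.mem_sdiff.2 ⟨Finset.mem_univ w, hwI⟩⟩)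
        by_cases hz : ∃ z, G.Adj w z ∧ z ≠ u
        · obtain ⟨z, hz, hzu⟩ := hz
          have hzI : z ∉ I := not_mem_I_of_adj hI hwI hz
          exact ⟨z, Finset.mem_erase.2 ⟨hzu, Finset.mem_sdiff.2 ⟨Finset.mem_univ z, hzI⟩⟩, hz.symm⟩
        · push_neg at hz
          obtain ⟨hadj, hleaf⟩ := leaf_of_nbr_eq hconn hcard hz
          exact absurd ⟨w, hadj.symm, hleaf⟩ hns
    · exact Finset.card_erase_lt_of_mem huC
  intro u v huv hu hv
  constructor
  · by_contra hns; exact key u v huv hu hv hns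
  · by_contra hns; exact key v u huv.symm hv hu hns

lemma cond1_of_eq {G : SimpleGraph V} [DecidableRel G.Adj] (hconn : G.Connected)
    (hcard : 2 ≤ Fintype.card V) {I : Finset V} (hI : IsIndepFinset G I)
    (hImax : I.card = indepNum G) (heq : domNum G = coverNum G) :
    ∀ v ∈ I, IsSupport G v →
      IsWeakSupport G v ∧ ∀ u, G.Adj v u → ¬ IsLeaf G u → IsSupport G u := by
  intro v hvI hsupp
  obtain ⟨l, hvl, hleafl⟩ := hsupp
  have hlI : l ∉ I := not_mem_I_of_adj hI hvI hvl
  have hlC : l ∈ Finset.univ \ I := Finset.mem_sdiff.2 ⟨Finset.mem_univ l, hlI⟩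
  constructor
  · -- weak support
    by_contra hws
    have hmem : l ∈ (G.neighborFinset v).filter fun t => G.degree t = 1 :=
      Finset.mem_filter.2 ⟨(SimpleGraph.mem_neighborFinset G v l).2 hvl, hleafl⟩
    have hlt : 1 < ((G.neighborFinset v).filter fun t => G.degree t = 1).card := by
      rcases Nat.lt_or_ge ((G.neighborFinset v).filter fun t => G.degree t = 1).card 1 with h | h
      · rw [Nat.lt_one_iff, Finset.card_eq_zero] at h
        rw [h] at hmem; simp at hmem
      · rcases Nat.lt_or_ge 1 ((G.neighborFinset v).filter fun t => G.degree t = 1).card with h' | h'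
        · exact h'
        · exact absurd (le_antisymm h' h) hws
    obtain ⟨l1, hl1, l2, hl2, hne⟩ := Finset.one_lt_card.1 hlt
    have hl1' := Finset.mem_filter.1 hl1
    have hl2' := Finset.mem_filter.1 hl2
    have hvl1 : G.Adj v l1 := (SimpleGraph.mem_neighborFinset G v l1).1 hl1'.1
    have hvl2 : G.Adj v l2 := (SimpleGraph.mem_neighborFinset G v l2).1 hl2'.1
    have hleaf1 : IsLeaf G l1 := hl1'.2
    have hleaf2 : IsLeaf G l2 := hl2'.2
    have h1C : l1 ∈ Finset.univ \ I :=
      Finset.mem_sdiff.2 ⟨Finset.mem_univ l1, not_mem_I_of_adj hI hvI hvl1⟩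
    have h2C : l2 ∈ Finset.univ \ I :=
      Finset.mem_sdiff.2 ⟨Finset.mem_univ l2, not_mem_I_of_adj hI hvI hvl2⟩
    apply forward_contra hI hImax
      (D := insert v ((Finset.univ \ I) \ {l1, l2})) ?_ ?_ heq
    · intro w hw
      have hwv : w ≠ v := fun h => hw (by rw [h]; exact Finset.mem_insert_self v _)
      by_cases hw1 : w = l1
      · exact ⟨v, Finset.mem_insert_self v _, hw1 ▸ hvl1⟩
      by_cases hw2 : w = l2
      · exact ⟨v, Finset.mem_insert_self v _, hw2 ▸ hvl2⟩
      have hwI : w ∈ I := by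
        by_contra hwI
        exact hw (Finset.mem_insert.2 (Or.inr (Finset.mem_sdiff.2
          ⟨Finset.mem_sdiff.2 ⟨Finset.mem_univ w, hwI⟩, by simp [hw1, hw2]⟩)))
      obtain ⟨z, hz⟩ := exists_adj_of_conn G hconn hcard w
      have hz1 : z ≠ l1 := by
        intro h; subst h
        exact hwv (leaf_unique_nbr hleaf1 hz.symm hvl1.symm)
      have hz2 : z ≠ l2 := by
        intro h; subst h
        exact hwv (leaf_unique_nbr hleaf2 hz.symm hvl2.symm)
      have hzI : z ∉ I := not_mem_I_of_adj hI hwI hz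
      exact ⟨z, Finset.mem_insert.2 (Or.inr (Finset.mem_sdiff.2
        ⟨Finset.mem_sdiff.2 ⟨Finset.mem_univ z, hzI⟩, by simp [hz1, hz2]⟩)), hz.symm⟩
    · have hsub : ({l1, l2} : Finset V) ⊆ Finset.univ \ I := by
        intro t ht
        rcases Finset.mem_insert.1 ht with h | h
        · exact h ▸ h1C
        · exact (Finset.mem_singleton.1 h) ▸ h2C
      have hvD : v ∉ (Finset.univ \ I) \ {l1, l2} := by
        intro h
        exact (Finset.mem_sdiff.1 (Finset.mem_sdiff.1 h).1).2 hvI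
      rw [Finset.card_insert_of_notMem hvD, Finset.card_sdiff_of_subset hsub,
        Finset.card_pair hne]
      have h2 : 2 ≤ (Finset.univ \ I).card :=
        le_trans (by rw [Finset.card_pair hne]) (Finset.card_le_card hsub)
      omega
  · -- every non-leaf neighbor is a support
    intro u hvu hul
    by_contra hns
    have hlu : l ≠ u := fun h => hul (h ▸ hleafl)
    have huI : u ∉ I := not_mem_I_of_adj hI hvI hvu
    have huC : u ∈ Finset.univ \ I := Finset.mem_sdiff.2 ⟨Finset.mem_univ u, huI⟩
    apply forward_contra hI hImax
      (D := insert v ((Finset.univ \ I) \ {l, u})) ?_ ?_ heq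
    · intro w hw
      have hwv : w ≠ v := fun h => hw (by rw [h]; exact Finset.mem_insert_self v _)
      by_cases hw1 : w = l
      · exact ⟨v, Finset.mem_insert_self v _, hw1 ▸ hvl⟩
      by_cases hw2 : w = u
      · exact ⟨v, Finset.mem_insert_self v _, hw2 ▸ hvu⟩
      have hwI : w ∈ I := by
        by_contra hwI
        exact hw (Finset.mem_insert.2 (Or.inr (Finset.mem_sdiff.2
          ⟨Finset.mem_sdiff.2 ⟨Finset.mem_univ w, hwI⟩, by simp [hw1, hw2]⟩)))
      by_cases hz : ∃ z, G.Adj w z ∧ z ≠ u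
      · obtain ⟨z, hz, hzu⟩ := hz
        have hz1 : z ≠ l := by
          intro h; subst h
          exact hwv (leaf_unique_nbr hleafl hz.symm hvl.symm)
        have hzI : z ∉ I := not_mem_I_of_adj hI hwI hz
        exact ⟨z, Finset.mem_insert.2 (Or.inr (Finset.mem_sdiff.2
          ⟨Finset.mem_sdiff.2 ⟨Finset.mem_univ z, hzI⟩, by simp [hz1, hzu]⟩)), hz.symm⟩
      · push_neg at hz
        obtain ⟨hadj, hleafw⟩ := leaf_of_nbr_eq hconn hcard hz
        exact absurd ⟨w, hadj.symm, hleafw⟩ hns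
    · have hsub : ({l, u} : Finset V) ⊆ Finset.univ \ I := by
        intro t ht
        rcases Finset.mem_insert.1 ht with h | h
        · exact h ▸ hlC
        · exact (Finset.mem_singleton.1 h) ▸ huC
      have hvD : v ∉ (Finset.univ \ I) \ {l, u} := by
        intro h
        exact (Finset.mem_sdiff.1 (Finset.mem_sdiff.1 h).1).2 hvI
      rw [Finset.card_insert_of_notMem hvD, Finset.card_sdiff_of_subset hsub,
        Finset.card_pair hlu]
      have h2 : 2 ≤ (Finset.univ \ I).card :=
        le_trans (by rw [Finset.card_pair hlu]) (Finset.card_le_card hsub)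
      omega

lemma cond3_of_eq {G : SimpleGraph V} [DecidableRel G.Adj] (hconn : G.Connected)
    (hcard : 2 ≤ Fintype.card V) {I : Finset V} (hI : IsIndepFinset G I)
    (hImax : I.card = indepNum G) (heq : domNum G = coverNum G) :
    ∀ x y : V, x ∉ I → y ∉ I →
      ¬ IsLeaf G x → ¬ IsSupport G x → ¬ IsLeaf G y → ¬ IsSupport G y →
      G.dist x y = 2 →
      ∃ xb ∈ I, ∃ yb ∈ I, xb ≠ yb ∧
        G.neighborFinset xb = {x, y} ∧ G.neighborFinset yb = {x, y} := by
  intro x y hx hy hlx hsx hly hsy hdist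
  by_contra hc
  push_neg at hc
  have hxy : x ≠ y := by
    intro h; subst h; rw [SimpleGraph.dist_self] at hdist; omega
  have hc2 := cond2_of_eq hconn hcard hI hImax heq
  -- get z ∈ I adjacent to both x and y, such that no OTHER vertex of I has nbhd {x,y}
  obtain ⟨z, hzI, hzx, hzy, hkey⟩ :
      ∃ z ∈ I, G.Adj z x ∧ G.Adj z y ∧
        ∀ w ∈ I, w ≠ z → G.neighborFinset w ≠ {x, y} := by
    by_cases hw : ∃ w ∈ I, G.neighborFinset w = {x, y}
    · obtain ⟨z, hzI, hzN⟩ := hw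
      have hzx : G.Adj z x := by
        rw [← SimpleGraph.mem_neighborFinset, hzN]; simp
      have hzy : G.Adj z y := by
        rw [← SimpleGraph.mem_neighborFinset, hzN]; simp
      refine ⟨z, hzI, hzx, hzy, fun w hwI hwz hwN => ?_⟩
      exact hc w hwI z hzI hwz hwN hzN
    · push_neg at hw
      obtain ⟨z, hxz, hzy⟩ := common_of_dist_two hconn hdist
      have hzI : z ∈ I := by
        by_contra hzI
        exact hsx (hc2 x z hxz hx hzI).1
      exact ⟨z, hzI, hxz.symm, hzy, fun w hwI _ => hw w hwI⟩
  have hxC : x ∈ Finset.univ \ I := Finset.mem_sdiff.2 ⟨Finset.mem_univ x, hx⟩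
  have hyC : y ∈ Finset.univ \ I := Finset.mem_sdiff.2 ⟨Finset.mem_univ y, hy⟩
  apply forward_contra hI hImax
    (D := insert z ((Finset.univ \ I) \ {x, y})) ?_ ?_ heq
  · intro w hw
    have hwz : w ≠ z := fun h => hw (by rw [h]; exact Finset.mem_insert_self z _)
    by_cases hw1 : w = x
    · exact ⟨z, Finset.mem_insert_self z _, hw1 ▸ hzx⟩
    by_cases hw2 : w = y
    · exact ⟨z, Finset.mem_insert_self z _, hw2 ▸ hzy⟩
    have hwI : w ∈ I := by
      by_contra hwI
      exact hw (Finset.mem_insert.2 (Or.inr (Finset.mem_sdiff.2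
        ⟨Finset.mem_sdiff.2 ⟨Finset.mem_univ w, hwI⟩, by simp [hw1, hw2]⟩)))
    by_cases ht : ∃ t, G.Adj w t ∧ t ≠ x ∧ t ≠ y
    · obtain ⟨t, ht, htx, hty⟩ := ht
      have htI : t ∉ I := not_mem_I_of_adj hI hwI ht
      exact ⟨t, Finset.mem_insert.2 (Or.inr (Finset.mem_sdiff.2
        ⟨Finset.mem_sdiff.2 ⟨Finset.mem_univ t, htI⟩, by simp [htx, hty]⟩)), ht.symm⟩
    · push_neg at ht
      by_cases hwx : G.Adj w x
      · by_cases hwy : G.Adj w y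
        · -- neighborhood is exactly {x, y}
          have hN : G.neighborFinset w = {x, y} := by
            ext t
            simp only [SimpleGraph.mem_neighborFinset, Finset.mem_insert,
              Finset.mem_singleton]
            constructor
            · intro h
              by_cases h1 : t = x
              · exact Or.inl h1
              · exact Or.inr (ht t h h1)
            · rintro (rfl | rfl)
              · exact hwx
              · exact hwy
          exact absurd hN (hkey w hwI hwz)
        · have hall : ∀ t, G.Adj w t → t = x := by
            intro t h
            by_contra h1
            exact hwy ((ht t h h1) ▸ h)
          obtain ⟨hadj, hleafw⟩ := leaf_of_nbr_eq hconn hcard hall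
          exact absurd ⟨w, hadj.symm, hleafw⟩ hsx
      · by_cases hwy : G.Adj w y
        · have hall : ∀ t, G.Adj w t → t = y := by
            intro t h
            by_cases h1 : t = x
            · exact absurd (h1 ▸ h) hwx
            · exact ht t h h1
          obtain ⟨hadj, hleafw⟩ := leaf_of_nbr_eq hconn hcard hall
          exact absurd ⟨w, hadj.symm, hleafw⟩ hsy
        · obtain ⟨t, htadj⟩ := exists_adj_of_conn G hconn hcard w
          by_cases h1 : t = x
          · exact absurd (h1 ▸ htadj) hwx
          · exact absurd ((ht t htadj h1) ▸ htadj) hwy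
  · have hsub : ({x, y} : Finset V) ⊆ Finset.univ \ I := by
      intro t ht
      rcases Finset.mem_insert.1 ht with h | h
      · exact h ▸ hxC
      · exact (Finset.mem_singleton.1 h) ▸ hyC
    have hzD : z ∉ (Finset.univ \ I) \ {x, y} := by
      intro h
      exact (Finset.mem_sdiff.1 (Finset.mem_sdiff.1 h).1).2 hzI
    rw [Finset.card_insert_of_notMem hzD, Finset.card_sdiff_of_subset hsub,
      Finset.card_pair hxy]
    have h2 : 2 ≤ (Finset.univ \ I).card :=
      le_trans (by rw [Finset.card_pair hxy]) (Finset.card_le_card hsub)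
    omega

lemma weak_support_unique {G : SimpleGraph V} [DecidableRel G.Adj] {w a b : V}
    (hws : IsWeakSupport G w) (ha : G.Adj w a) (hb : G.Adj w b)
    (hla : IsLeaf G a) (hlb : IsLeaf G b) : a = b := by
  by_contra hne
  have h1 : a ∈ (G.neighborFinset w).filter fun l => G.degree l = 1 :=
    Finset.mem_filter.2 ⟨(SimpleGraph.mem_neighborFinset G w a).2 ha, hla⟩
  have h2 : b ∈ (G.neighborFinset w).filter fun l => G.degree l = 1 :=
    Finset.mem_filter.2 ⟨(SimpleGraph.mem_neighborFinset G w b).2 hb, hlb⟩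
  have := Finset.one_lt_card.2 ⟨a, h1, b, h2, hne⟩
  unfold IsWeakSupport at hws
  omega

lemma backward {G : SimpleGraph V} [DecidableRel G.Adj] (hconn : G.Connected)
    (hcard : 2 ≤ Fintype.card V) {I : Finset V} (hI : IsIndepFinset G I)
    (hImax : I.card = indepNum G)
    (hc1 : ∀ v ∈ I, IsSupport G v →
        IsWeakSupport G v ∧ ∀ u, G.Adj v u → ¬ IsLeaf G u → IsSupport G u)
    (hc2 : ∀ u v : V, G.Adj u v → u ∉ I → v ∉ I → IsSupport G u ∧ IsSupport G v)
    (hc3 : ∀ x y : V, x ∉ I → y ∉ I →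
        ¬ IsLeaf G x → ¬ IsSupport G x → ¬ IsLeaf G y → ¬ IsSupport G y →
        G.dist x y = 2 →
        ∃ xb ∈ I, ∃ yb ∈ I, xb ≠ yb ∧
          G.neighborFinset xb = {x, y} ∧ G.neighborFinset yb = {x, y}) :
    domNum G = coverNum G := by
  classical
  letI : LinearOrder V := LinearOrder.lift' (Fintype.equivFin V) (Fintype.equivFin V).injective
  apply le_antisymm (domNum_le_coverNum hconn hcard)
  obtain ⟨D, hD, hDcard⟩ := domNum_exists G
  rw [← hDcard, coverNum_eq_compl_card hI hImax]
  set S : Finset V := (Finset.univ \ I) \ D with hSdef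
  have hSmem : ∀ u, u ∈ S ↔ (u ∉ I ∧ u ∉ D) := by
    intro u; simp [hSdef, Finset.mem_sdiff]
  have master : ∀ u, ∃ w, u ∈ S →
      (w ∈ D ∧ w ∈ I ∧ G.Adj u w ∧
        (IsLeaf G u ∨
         (¬IsLeaf G u ∧ IsSupport G u ∧ IsLeaf G w) ∨
         (¬IsLeaf G u ∧ ¬IsSupport G u ∧
           ((∀ v ∈ S, ¬IsLeaf G v → ¬IsSupport G v → G.Adj v w → v = u) ∨
            (∃ v ∈ S, ¬IsLeaf G v ∧ ¬IsSupport G v ∧ v ≠ u ∧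
              G.neighborFinset w = {u, v} ∧
              ∀ w' ∈ I, G.neighborFinset w' = {u, v} →
                ((u < v → w ≤ w') ∧ (v < u → w' ≤ w))))))) := by
    intro u
    by_cases hu : u ∈ S
    swap
    · exact ⟨u, fun h => absurd h hu⟩
    obtain ⟨huI, huD⟩ := (hSmem u).1 hu
    by_cases hL : IsLeaf G u
    · obtain ⟨d, hdD, hdu⟩ := hD u huD
      have hdI : d ∈ I := leaf_support_mem hI hImax hL huI hdu.symm
      exact ⟨d, fun _ => ⟨hdD, hdI, hdu.symm, Or.inl hL⟩⟩
    by_cases hSup : IsSupport G u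
    · obtain ⟨l, hul, hleafl⟩ := hSup
      have hlI : l ∈ I := by
        by_contra h
        exact huI (leaf_support_mem hI hImax hleafl h hul.symm)
      have hlD : l ∈ D := by
        by_contra h
        obtain ⟨d, hdD, hdl⟩ := hD l h
        have heq : d = u := leaf_unique_nbr hleafl hdl.symm hul.symm
        exact huD (heq ▸ hdD)
      exact ⟨l, fun _ => ⟨hlD, hlI, hul, Or.inr (Or.inl ⟨hL, ⟨l, hul, hleafl⟩, hleafl⟩)⟩⟩
    obtain ⟨d, hdD, hdu⟩ := hD u huD
    have hdI : d ∈ I := by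
      by_contra h
      exact hSup (hc2 u d hdu.symm huI h).1
    by_cases hPriv : ∃ w, w ∈ D ∧ w ∈ I ∧ G.Adj u w ∧
        ∀ v ∈ S, ¬IsLeaf G v → ¬IsSupport G v → G.Adj v w → v = u
    · obtain ⟨w, h1, h2, h3, h4⟩ := hPriv
      exact ⟨w, fun _ => ⟨h1, h2, h3, Or.inr (Or.inr ⟨hL, hSup, Or.inl h4⟩)⟩⟩
    · push_neg at hPriv
      obtain ⟨v, hvS, hvL, hvSup, hvw, hvu⟩ := hPriv d hdD hdI hdu.symm
      obtain ⟨hvI', hvD'⟩ := (hSmem v).1 hvS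
      have hdist : G.dist u v = 2 := by
        apply dist_eq_two_of hdu.symm hvw.symm hvu.symm
        intro h
        exact hSup (hc2 u v h huI hvI').1
      obtain ⟨xb, hxbI, yb, hybI, hxyne, hNxb, hNyb⟩ :=
        hc3 u v huI hvI' hL hSup hvL hvSup hdist
      set P := I.filter (fun w => G.neighborFinset w = {u, v}) with hPdef
      have hPne : P.Nonempty := ⟨xb, Finset.mem_filter.2 ⟨hxbI, hNxb⟩⟩
      set w := if u < v then P.min' hPne else P.max' hPne with hwdef
      have hwP : w ∈ P := by
        rw [hwdef]; split
        · exact P.min'_mem hPne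
        · exact P.max'_mem hPne
      have hwI : w ∈ I := (Finset.mem_filter.1 hwP).1
      have hwN : G.neighborFinset w = {u, v} := by
        have := (Finset.mem_filter.1 hwP).2
        simpa using this
      have hadjwu : G.Adj w u :=
        (SimpleGraph.mem_neighborFinset G w u).1 (by rw [hwN]; simp)
      have hwD : w ∈ D := by
        by_contra h
        obtain ⟨d', hd'D, hd'w⟩ := hD w h
        have hmem : d' ∈ G.neighborFinset w :=
          (SimpleGraph.mem_neighborFinset G w d').2 hd'w.symm
        rw [hwN] at hmem
        rcases Finset.mem_insert.1 hmem with h' | h'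
        · exact huD (h' ▸ hd'D)
        · exact hvD' ((Finset.mem_singleton.1 h') ▸ hd'D)
      refine ⟨w, fun _ => ⟨hwD, hwI, hadjwu.symm,
        Or.inr (Or.inr ⟨hL, hSup, Or.inr ⟨v, hvS, hvL, hvSup, hvu, hwN, ?_⟩⟩)⟩⟩
      intro w' hw'I hw'N
      have hw'P : w' ∈ P := Finset.mem_filter.2 ⟨hw'I, hw'N⟩
      constructor
      · intro hlt
        rw [hwdef, if_pos hlt]
        exact P.min'_le w' hw'P
      · intro hlt
        rw [hwdef, if_neg (not_lt.2 (le_of_lt hlt))]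
        exact P.le_max' w' hw'P
  choose F hF using master
  have hmaps : ∀ a ∈ S, F a ∈ D ∩ I :=
    fun a ha => Finset.mem_inter.2 ⟨(hF a ha).1, (hF a ha).2.1⟩
  have hinj : Set.InjOn F ↑S := by
    intro a ha' b hb' hab
    have ha : a ∈ S := ha'
    have hb : b ∈ S := hb'
    obtain ⟨haD, haI, haAdj, hcaseA⟩ := hF a ha
    obtain ⟨hbD, hbI, hbAdj, hcaseB⟩ := hF b hb
    obtain ⟨haI', haD'⟩ := (hSmem a).1 ha
    obtain ⟨hbI', hbD'⟩ := (hSmem b).1 hb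
    have hbAdj' : G.Adj (F a) b := by rw [hab]; exact hbAdj.symm
    have haAdj' : G.Adj (F a) a := haAdj.symm
    rcases hcaseA with hLa | ⟨hnLa, hSa, hleafFa⟩ | ⟨hnLa, hnSa, hOa⟩
    · rcases hcaseB with hLb | ⟨hnLb, hSb, hleafFb⟩ | ⟨hnLb, hnSb, hOb⟩
      · -- L, L
        have hsupp : IsSupport G (F a) := ⟨a, haAdj', hLa⟩
        have hws := (hc1 (F a) haI hsupp).1
        exact weak_support_unique hws haAdj' hbAdj' hLa hLb
      · -- L, S
        have hleafFa' : IsLeaf G (F a) := by rw [hab]; exact hleafFb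
        exact leaf_unique_nbr hleafFa' haAdj' hbAdj'
      · -- L, O
        have hsupp : IsSupport G (F a) := ⟨a, haAdj', hLa⟩
        exact absurd ((hc1 (F a) haI hsupp).2 b hbAdj' hnLb) hnSb
    · rcases hcaseB with hLb | ⟨hnLb, hSb, hleafFb⟩ | ⟨hnLb, hnSb, hOb⟩
      · -- S, L
        exact leaf_unique_nbr hleafFa haAdj' hbAdj'
      · -- S, S
        exact leaf_unique_nbr hleafFa haAdj' hbAdj'
      · -- S, O
        exact leaf_unique_nbr hleafFa haAdj' hbAdj'
    · rcases hcaseB with hLb | ⟨hnLb, hSb, hleafFb⟩ | ⟨hnLb, hnSb, hOb⟩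
      · -- O, L
        have hsuppb : IsSupport G (F b) := ⟨b, hbAdj.symm, hLb⟩
        have haAdjb : G.Adj (F b) a := by rw [← hab]; exact haAdj.symm
        exact absurd ((hc1 (F b) hbI hsuppb).2 a haAdjb hnLa) hnSa
      · -- O, S
        have hleafFa' : IsLeaf G (F a) := by rw [hab]; exact hleafFb
        exact leaf_unique_nbr hleafFa' haAdj' hbAdj'
      · -- O, O
        rcases hOa with hPa | ⟨v, hvS, hvL, hvSup, hvne, hNa, hminA⟩
        · exact (hPa b hb hnLb hnSb hbAdj'.symm).symm
        rcases hOb with hPb | ⟨v', hv'S, hv'L, hv'Sup, hv'ne, hNb, hminB⟩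
        · have haAdjb : G.Adj a (F b) := by rw [← hab]; exact haAdj
          exact hPb a ha hnLa hnSa haAdjb
        by_cases haeqb : a = b
        · exact haeqb
        have hNN : ({a, v} : Finset V) = {b, v'} := by rw [← hNa, hab, hNb]
        have hbv : b = v := by
          have : b ∈ ({a, v} : Finset V) := by rw [hNN]; simp
          rcases Finset.mem_insert.1 this with h | h
          · exact absurd h.symm haeqb
          · exact Finset.mem_singleton.1 h
        have hav' : a = v' := by
          have : a ∈ ({b, v'} : Finset V) := by rw [← hNN]; simp
          rcases Finset.mem_insert.1 this with h | h
          · exact absurd h haeqb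
          · exact Finset.mem_singleton.1 h
        subst hbv
        subst hav'
        -- now hNa : N (F a) = {a, b}, hminA over {a, b}; hminB over {b, a}
        have hnadj : ¬ G.Adj a b := fun h => hnSa (hc2 a b h haI' hbI').1
        have hdist : G.dist a b = 2 := dist_eq_two_of haAdj hbAdj' haeqb hnadj
        obtain ⟨xb, hxbI, yb, hybI, hxyne, hNxb, hNyb⟩ :=
          hc3 a b haI' hbI' hnLa hnSa hnLb hnSb hdist
        have hpc : ({b, a} : Finset V) = {a, b} := Finset.pair_comm b a
        have hxbA := hminA xb hxbI hNxb
        have hybA := hminA yb hybI hNyb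
        have hxbB := hminB xb hxbI (by rw [hpc]; exact hNxb)
        have hybB := hminB yb hybI (by rw [hpc]; exact hNyb)
        rcases lt_trichotomy a b with hlt | heq | hlt
        · exfalso
          have h1 : F a = xb := le_antisymm (hxbA.1 hlt) (by rw [hab]; exact hxbB.2 hlt)
          have h2 : F a = yb := le_antisymm (hybA.1 hlt) (by rw [hab]; exact hybB.2 hlt)
          exact hxyne (h1 ▸ h2 ▸ rfl)
        · exact heq
        · exfalso
          have h1 : F a = xb := le_antisymm (by rw [hab]; exact hxbB.1 hlt) (hxbA.2 hlt)
          have h2 : F a = yb := le_antisymm (by rw [hab]; exact hybB.1 hlt) (hybA.2 hlt)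
          exact hxyne (h1 ▸ h2 ▸ rfl)
  have hkey : S.card ≤ (D ∩ I).card := Finset.card_le_card_of_injOn F hmaps hinj
  have h1 : S.card + ((Finset.univ \ I) ∩ D).card = (Finset.univ \ I).card :=
    Finset.card_sdiff_add_card_inter (Finset.univ \ I) D
  have h2 : (D ∩ I).card + (D \ I).card = D.card := Finset.card_inter_add_card_sdiff D I
  have h3 : (Finset.univ \ I) ∩ D = D \ I := by
    ext t
    simp [Finset.mem_sdiff, Finset.mem_inter, and_comm]
  rw [h3] at h1
  omega

theorem domNum_eq_coverNum_characterization (G : SimpleGraph V) [DecidableRel G.Adj]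
    (hconn : G.Connected) (hcard : 2 ≤ Fintype.card V)
    (I : Finset V) (hI : IsIndepFinset G I) (hImax : I.card = indepNum G) :
    domNum G = coverNum G ↔
      ((∀ v ∈ I, IsSupport G v →
          IsWeakSupport G v ∧ ∀ u, G.Adj v u → ¬ IsLeaf G u → IsSupport G u) ∧
       (∀ u v : V, G.Adj u v → u ∉ I → v ∉ I → IsSupport G u ∧ IsSupport G v) ∧
       (∀ x y : V, x ∉ I → y ∉ I →
          ¬ IsLeaf G x → ¬ IsSupport G x → ¬ IsLeaf G y → ¬ IsSupport G y →
          G.dist x y = 2 →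
          ∃ xb ∈ I, ∃ yb ∈ I, xb ≠ yb ∧
            G.neighborFinset xb = {x, y} ∧ G.neighborFinset yb = {x, y})) := by
  constructor
  · intro heq
    exact ⟨cond1_of_eq hconn hcard hI hImax heq,
           cond2_of_eq hconn hcard hI hImax heq,
           cond3_of_eq hconn hcard hI hImax heq⟩
  · rintro ⟨hc1, hc2, hc3⟩
    exact backward hconn hcard hI hImax hc1 hc2 hc3
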